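/- Let 𝔞 be a small pre-additive category such that every full subcategory of 𝔞 with finitely many objects is semi-hereditary (i.e. its category of finitely presented modules is abelian and hereditary). Then 𝔞 is itself semi-hereditary. -/

import Mathlib

open CategoryTheory Limits Opposite

universe u

/-- A module over a small preadditive category `𝔞` is finitely generated projective
iff it is a direct summand of a finite direct sum of representables `𝔞(Aᵢ, −)`. -/
def IsFGProjMod {𝔞 : Type u} [SmallCategory 𝔞] [Preadditive 𝔞]
    (M : 𝔞 ⥤ AddCommGrpCat.{u}) : Prop :=
  letI : HasFiniteBiproducts (𝔞 ⥤ AddCommGrpCat.{u}) :=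
    HasFiniteBiproducts.of_hasFiniteProducts
  ∃ (n : ℕ) (A : Fin n → 𝔞)
    (s : M ⟶ ⨁ fun i => preadditiveCoyoneda.obj (op (A i)))
    (r : (⨁ fun i => preadditiveCoyoneda.obj (op (A i))) ⟶ M),
      s ≫ r = 𝟙 M

/-- A small preadditive category is semi-hereditary: the kernel of any morphism
between finitely generated projective modules is finitely generated projective
and splits off.  (This is the equivalent formulation of the condition that the
finitely presented modules form an abelian hereditary category.) -/
def IsSemiHereditary (𝔞 : Type u) [SmallCategory 𝔞] [Preadditive 𝔞] : Prop :=
  ∀ (P Q : 𝔞 ⥤ AddCommGrpCat.{u}) (p : P ⟶ Q), IsFGProjMod P → IsFGProjMod Q →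
    IsFGProjMod (kernel p) ∧ IsSplitMono (kernel.ι p)

noncomputable section
set_option linter.unusedSectionVars false

namespace Stmt6Aux
variable {C : Type u} [SmallCategory C] [Preadditive C]

attribute [local instance] HasFiniteBiproducts.of_hasFiniteProducts

lemma nat_apply {M N : C ⥤ AddCommGrpCat.{u}} (η : M ⟶ N) {X Y : C} (f : X ⟶ Y) (x : M.obj X) :
    η.app Y (M.map f x) = N.map f (η.app X x) := by
  have h := η.naturality f
  exact congrArg (fun (g : M.obj X ⟶ N.obj Y) => g x) h

lemma hom_sum_apply {M N : AddCommGrpCat.{u}} {ι : Type} (s : Finset ι) (f : ι → (M ⟶ N)) (x : M) :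
    (∑ i ∈ s, f i) x = ∑ i ∈ s, f i x := by
  classical
  induction s using Finset.induction with
  | empty => simp
  | insert _ _ h ih =>
      rw [Finset.sum_insert h, Finset.sum_insert h, ← ih]
      rfl

lemma natsum_app_apply {M N : C ⥤ AddCommGrpCat.{u}} {ι : Type} (s : Finset ι)
    (f : ι → (M ⟶ N)) (X : C) (x : M.obj X) :
    (∑ i ∈ s, f i).app X x = ∑ i ∈ s, (f i).app X x := by
  rw [NatTrans.app_sum]
  exact hom_sum_apply s (fun i => (f i).app X) x

lemma biproduct_decomp {n : ℕ} (F : Fin n → (C ⥤ AddCommGrpCat.{u})) (X : C) (b : (⨁ F).obj X) :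
    b = ∑ i : Fin n, (biproduct.ι F i).app X ((biproduct.π F i).app X b) := by
  have h : (𝟙 (⨁ F) : ⨁ F ⟶ ⨁ F).app X b = b := by rw [NatTrans.id_app]; rfl
  calc b = (𝟙 (⨁ F) : ⨁ F ⟶ ⨁ F).app X b := h.symm
    _ = (∑ i : Fin n, biproduct.π F i ≫ biproduct.ι F i).app X b := by rw [biproduct.total]
    _ = ∑ i : Fin n, (biproduct.π F i ≫ biproduct.ι F i).app X b :=
        natsum_app_apply _ _ _ _
    _ = ∑ i : Fin n, (biproduct.ι F i).app X ((biproduct.π F i).app X b) := by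
        refine Finset.sum_congr rfl fun i _ => ?_
        rw [NatTrans.comp_app]; rfl

section
variable {C : Type u} [SmallCategory C] [Preadditive C]

/-- The family of representables. -/
def coyF {n : ℕ} (A : Fin n → C) : Fin n → (C ⥤ AddCommGrpCat.{u}) :=
  fun i => preadditiveCoyoneda.obj (op (A i))

lemma coy_map_apply {A X Y : C} (f : X ⟶ Y) (g : (preadditiveCoyoneda.obj (op A)).obj X) :
    (preadditiveCoyoneda.obj (op A)).map f g = (g : A ⟶ X) ≫ f := rfl

variable {P : C ⥤ AddCommGrpCat.{u}} {n : ℕ} {A : Fin n → C}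

/-- Components of an element of `P` w.r.t. the chosen presentation. -/
def gElt (sP : P ⟶ ⨁ coyF A) (i : Fin n) {X : C} (w : P.obj X) : A i ⟶ X :=
  (biproduct.π (coyF A) i).app X (sP.app X w)

def eElt (A : Fin n → C) (i : Fin n) : (⨁ coyF A).obj (A i) :=
  (biproduct.ι (coyF A) i).app (A i) (𝟙 (A i))

def yElt (rP : (⨁ coyF A) ⟶ P) (i : Fin n) : P.obj (A i) :=
  rP.app (A i) (eElt A i)

lemma iota_app_eq (i : Fin n) {X : C} (g : (coyF A i).obj X) :
    (biproduct.ι (coyF A) i).app X g = (⨁ coyF A).map (g : A i ⟶ X) (eElt A i) := by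
  have h := nat_apply (biproduct.ι (coyF A) i) (g : A i ⟶ X) (show (coyF A i).obj (A i) from 𝟙 (A i))
  have h2 : (coyF A i).map (g : A i ⟶ X) (show (coyF A i).obj (A i) from 𝟙 (A i)) = g := by
    rw [show ((coyF A i).map (g : A i ⟶ X) (show (coyF A i).obj (A i) from 𝟙 (A i))) =
      (𝟙 (A i) ≫ (show A i ⟶ X from g)) from rfl, Category.id_comp]
  conv_lhs => rw [← h2]
  exact h

lemma decomp (sP : P ⟶ ⨁ coyF A) (rP : (⨁ coyF A) ⟶ P) (hPr : sP ≫ rP = 𝟙 P)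
    {X : C} (w : P.obj X) :
    w = ∑ i : Fin n, P.map (gElt sP i w) (yElt rP i) := by
  have hw : rP.app X (sP.app X w) = w := by
    have := congrArg (fun (η : P ⟶ P) => η.app X w) hPr
    exact this
  have hb : (sP.app X w) = ∑ i : Fin n, (biproduct.ι (coyF A) i).app X (gElt sP i w) :=
    biproduct_decomp (coyF A) X (sP.app X w)
  calc w = rP.app X (sP.app X w) := hw.symm
    _ = rP.app X (∑ i : Fin n, (biproduct.ι (coyF A) i).app X (gElt sP i w)) := by
        rw [← hb]
    _ = ∑ i : Fin n, rP.app X ((biproduct.ι (coyF A) i).app X (gElt sP i w)) :=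
        map_sum _ _ _
    _ = ∑ i : Fin n, P.map (gElt sP i w) (yElt rP i) := by
        refine Finset.sum_congr rfl fun i _ => ?_
        rw [iota_app_eq i (gElt sP i w), nat_apply rP]
        exact rfl

lemma biprod_coy_map_add {X Y : C} (f g : X ⟶ Y) (b : (⨁ coyF A).obj X) :
    (⨁ coyF A).map (f + g) b = (⨁ coyF A).map f b + (⨁ coyF A).map g b := by
  have key : ∀ (σ : X ⟶ Y),
      (⨁ coyF A).map σ b
        = ∑ i : Fin n, (biproduct.ι (coyF A) i).app Y
            ((coyF A i).map σ ((biproduct.π (coyF A) i).app X b)) := by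
    intro σ
    calc (⨁ coyF A).map σ b
        = (⨁ coyF A).map σ (∑ i : Fin n,
            (biproduct.ι (coyF A) i).app X ((biproduct.π (coyF A) i).app X b)) := by
          rw [← biproduct_decomp]
      _ = ∑ i : Fin n, (⨁ coyF A).map σ
            ((biproduct.ι (coyF A) i).app X ((biproduct.π (coyF A) i).app X b)) :=
          map_sum _ _ _
      _ = _ := by
          refine Finset.sum_congr rfl fun i _ => ?_
          rw [← nat_apply (biproduct.ι (coyF A) i)]
  rw [key (f + g), key f, key g, ← Finset.sum_add_distrib]
  refine Finset.sum_congr rfl fun i _ => ?_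
  rw [show ((coyF A i).map (f + g) ((biproduct.π (coyF A) i).app X b))
      = (coyF A i).map f ((biproduct.π (coyF A) i).app X b)
        + (coyF A i).map g ((biproduct.π (coyF A) i).app X b) from
    Preadditive.comp_add _ _ _ _ _ _]
  exact map_add _ _ _

lemma retract_map_add (sP : P ⟶ ⨁ coyF A) (rP : (⨁ coyF A) ⟶ P) (hPr : sP ≫ rP = 𝟙 P)
    {X Y : C} (f g : X ⟶ Y) (x : P.obj X) :
    P.map (f + g) x = P.map f x + P.map g x := by
  have hv : ∀ (v : P.obj Y), rP.app Y (sP.app Y v) = v := by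
    intro v; exact congrArg (fun (η : P ⟶ P) => η.app Y v) hPr
  calc P.map (f + g) x = rP.app Y (sP.app Y (P.map (f + g) x)) := (hv _).symm
    _ = rP.app Y ((⨁ coyF A).map (f + g) (sP.app X x)) := by rw [nat_apply sP]
    _ = rP.app Y ((⨁ coyF A).map f (sP.app X x) + (⨁ coyF A).map g (sP.app X x)) := by
        rw [biprod_coy_map_add]
    _ = rP.app Y ((⨁ coyF A).map f (sP.app X x)) + rP.app Y ((⨁ coyF A).map g (sP.app X x)) :=
        map_add _ _ _
    _ = P.map f x + P.map g x := by
        rw [← nat_apply sP, ← nat_apply sP, hv, hv]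

end
end Stmt6Aux

namespace Stmt6Aux
section
set_option linter.unusedSectionVars false
attribute [local instance] HasFiniteBiproducts.of_hasFiniteProducts
variable {C : Type u} [SmallCategory C] [Preadditive C]

/-- Restriction to a full subcategory. -/
def res (T : Set C) : (C ⥤ AddCommGrpCat.{u}) ⥤ (ObjectProperty.FullSubcategory (fun x => x ∈ T) ⥤ AddCommGrpCat.{u}) :=
  (Functor.whiskeringLeft _ _ _).obj (ObjectProperty.ι (fun x => x ∈ T))

instance (T : Set C) : (res (C := C) T).Additive := {}

def res_coy (T : Set C) (A₀ : C) (hA : A₀ ∈ T) :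
    (res T).obj (preadditiveCoyoneda.obj (op A₀)) ≅
      preadditiveCoyoneda.obj (op (⟨A₀, hA⟩ : ObjectProperty.FullSubcategory (fun x => x ∈ T))) :=
  NatIso.ofComponents (fun Y => AddEquiv.toAddCommGrpIso
    { toFun := fun f => ObjectProperty.homMk f, invFun := fun f => f.hom,
      left_inv := fun _ => rfl, right_inv := fun _ => rfl, map_add' := fun _ _ => rfl })
    (fun _ => by ext; rfl)

lemma res_fgproj (T : Set C) {M : C ⥤ AddCommGrpCat.{u}} {n : ℕ} {A : Fin n → C}
    (sM : M ⟶ ⨁ coyF A) (rM : (⨁ coyF A) ⟶ M) (hMr : sM ≫ rM = 𝟙 M)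
    (hA : ∀ i, A i ∈ T) :
    IsFGProjMod ((res T).obj M) := by
  refine ⟨n, fun i => ⟨A i, hA i⟩, ?_⟩
  let c : (res T).obj (⨁ coyF A) ⟶ ⨁ coyF (fun i => (⟨A i, hA i⟩ : ObjectProperty.FullSubcategory (fun x => x ∈ T))) :=
    biproduct.lift fun i => (res T).map (biproduct.π (coyF A) i) ≫
      (res_coy T (A i) (hA i)).hom
  let d : (⨁ coyF (fun i => (⟨A i, hA i⟩ : ObjectProperty.FullSubcategory (fun x => x ∈ T)))) ⟶ (res T).obj (⨁ coyF A) :=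
    biproduct.desc fun i => (res_coy T (A i) (hA i)).inv ≫
      (res T).map (biproduct.ι (coyF A) i)
  have hcd : c ≫ d = 𝟙 _ := by
    rw [show c ≫ d = biproduct.lift (fun i => (res T).map (biproduct.π (coyF A) i) ≫
        (res_coy T (A i) (hA i)).hom) ≫ biproduct.desc (fun i =>
        (res_coy T (A i) (hA i)).inv ≫ (res T).map (biproduct.ι (coyF A) i)) from rfl,
      biproduct.lift_desc]
    have : ∀ i : Fin n, ((res T).map (biproduct.π (coyF A) i) ≫
        (res_coy T (A i) (hA i)).hom) ≫
        ((res_coy T (A i) (hA i)).inv ≫ (res T).map (biproduct.ι (coyF A) i))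
        = (res T).map (biproduct.π (coyF A) i ≫ biproduct.ι (coyF A) i) := by
      intro i
      rw [Functor.map_comp]
      erw [Category.assoc, Iso.hom_inv_id_assoc]
    rw [Finset.sum_congr rfl fun i _ => this i, ← Functor.map_sum, biproduct.total,
      CategoryTheory.Functor.map_id]
  exact ⟨(res T).map sM ≫ c, d ≫ (res T).map rM, by
    erw [Category.assoc, ← Category.assoc c d, hcd, Category.id_comp, ← Functor.map_comp, hMr,
      CategoryTheory.Functor.map_id]⟩

end
end Stmt6Aux

namespace Stmt6Aux
section
set_option linter.unusedSectionVars false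
attribute [local instance] HasFiniteBiproducts.of_hasFiniteProducts
variable {C : Type u} [SmallCategory C] [Preadditive C]

lemma retraction_exists {P Q : C ⥤ AddCommGrpCat.{u}} (p : P ⟶ Q) (T : Set C)
    (hT : IsSemiHereditary (ObjectProperty.FullSubcategory (fun x => x ∈ T)))
    (hP : IsFGProjMod ((res T).obj P)) (hQ : IsFGProjMod ((res T).obj Q)) :
    ∃ ρ : (res T).obj P ⟶ (res T).obj (kernel p),
      (res T).map (kernel.ι p) ≫ ρ = 𝟙 ((res T).obj (kernel p)) := by
  obtain ⟨-, hsplit⟩ := hT _ _ ((res T).map p) hP hQ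
  haveI hpres : PreservesLimit (parallelPair p 0) (res T) :=
    inferInstanceAs (PreservesLimit (parallelPair p 0)
      ((Functor.whiskeringLeft _ _ _).obj (ObjectProperty.ι (fun x => x ∈ T))))
  haveI hiso : IsIso (kernelComparison p (res T)) := inferInstance
  refine ⟨retraction (kernel.ι ((res T).map p)) ≫ inv (kernelComparison p (res T)), ?_⟩
  have hc := kernelComparison_comp_ι p (res T)
  calc (res T).map (kernel.ι p) ≫ retraction (kernel.ι ((res T).map p)) ≫
        inv (kernelComparison p (res T))
      = (kernelComparison p (res T) ≫ kernel.ι ((res T).map p)) ≫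
          retraction (kernel.ι ((res T).map p)) ≫ inv (kernelComparison p (res T)) := by
        rw [hc]
    _ = kernelComparison p (res T) ≫ (kernel.ι ((res T).map p) ≫
          retraction (kernel.ι ((res T).map p))) ≫ inv (kernelComparison p (res T)) := by
        simp only [Category.assoc]
    _ = 𝟙 _ := by rw [IsSplitMono.id, Category.id_comp, IsIso.hom_inv_id]

lemma kernel_ι_app_injective {P Q : C ⥤ AddCommGrpCat.{u}} (p : P ⟶ Q) (X : C) :
    Function.Injective ((kernel.ι p).app X) := by
  have hm : Mono ((kernel.ι p).app X) := inferInstance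
  exact (AddCommGrpCat.mono_iff_injective _).mp hm

lemma mono_into_add {K P : C ⥤ AddCommGrpCat.{u}} (j : K ⟶ P)
    (hinj : ∀ X, Function.Injective (j.app X))
    (hPadd : ∀ {X Y : C} (f g : X ⟶ Y) (x : P.obj X),
      P.map (f + g) x = P.map f x + P.map g x)
    {X Y : C} (f g : X ⟶ Y) (x : K.obj X) :
    K.map (f + g) x = K.map f x + K.map g x := by
  apply hinj Y
  rw [map_add, nat_apply j, nat_apply j, nat_apply j, hPadd]

end
end Stmt6Aux


open Stmt6Aux

/-- If every full subcategory of `𝔞` with finitely many objects is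
semi-hereditary, then `𝔞` is semi-hereditary. -/
theorem stmt6 (𝔞 : Type u) [SmallCategory 𝔞] [Preadditive 𝔞]
    (h : ∀ S : Set 𝔞, S.Finite → IsSemiHereditary (ObjectProperty.FullSubcategory (fun x : 𝔞 => x ∈ S))) :
    IsSemiHereditary 𝔞 := by
  intro P Q p hP hQ
  obtain ⟨n, A, sP, rP, hPr⟩ := hP
  obtain ⟨m, B, sQ, rQ, hQr⟩ := hQ
  letI : HasFiniteBiproducts (𝔞 ⥤ AddCommGrpCat.{u}) :=
    HasFiniteBiproducts.of_hasFiniteProducts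
  set j : kernel p ⟶ P := kernel.ι p with hj
  have jinj : ∀ X, Function.Injective (j.app X) := kernel_ι_app_injective p
  have Padd : ∀ {X Y : 𝔞} (f g : X ⟶ Y) (x : P.obj X),
      P.map (f + g) x = P.map f x + P.map g x :=
    fun f g x => retract_map_add sP rP hPr f g x
  have Kadd : ∀ {X Y : 𝔞} (f g : X ⟶ Y) (x : (kernel p).obj X),
      (kernel p).map (f + g) x = (kernel p).map f x + (kernel p).map g x :=
    fun f g x => mono_into_add j jinj Padd f g x
  have getρ : ∀ (T : Set 𝔞), T.Finite → (∀ i, A i ∈ T) → (∀ i, B i ∈ T) →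
      ∃ ρ : (res T).obj P ⟶ (res T).obj (kernel p),
        (res T).map (kernel.ι p) ≫ ρ = 𝟙 ((res T).obj (kernel p)) :=
    fun T hTfin hA hB => retraction_exists p T (h T hTfin)
      (res_fgproj T sP rP hPr hA) (res_fgproj T sQ rQ hQr hB)
  set S : Set 𝔞 := Set.range A ∪ Set.range B with hS
  have hSfin : S.Finite := (Set.finite_range A).union (Set.finite_range B)
  have memA : ∀ i, A i ∈ S := fun i => Or.inl ⟨i, rfl⟩
  have memB : ∀ i, B i ∈ S := fun i => Or.inr ⟨i, rfl⟩
  obtain ⟨ρS, hρS⟩ := getρ S hSfin memA memB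
  set z : ∀ i : Fin n, (kernel p).obj (A i) :=
    (fun i => ρS.app ⟨A i, memA i⟩ (yElt rP i)) with hz
  -- the would-be retraction
  set φ : ∀ i : Fin n, coyF A i ⟶ kernel p := (fun i =>
    { app := fun X => AddCommGrpCat.ofHom (AddMonoidHom.mk' (fun f => (kernel p).map (f : A i ⟶ X) (z i))
        (fun f f' => Kadd f f' (z i)))
      naturality := by
        intro X Y σ
        refine AddCommGrpCat.ext fun f => ?_
        show (kernel p).map ((f : A i ⟶ X) ≫ σ) (z i)
          = (kernel p).map σ ((kernel p).map (f : A i ⟶ X) (z i))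
        erw [CategoryTheory.Functor.map_comp]
        rfl }) with hφ
  set t : P ⟶ kernel p := sP ≫ biproduct.desc φ with ht
  have tcomp : ∀ (X : 𝔞) (w : P.obj X),
      t.app X w = ∑ i : Fin n, (kernel p).map (gElt sP i w) (z i) := by
    intro X w
    have h1 : t.app X w = (biproduct.desc φ).app X (sP.app X w) := rfl
    have hb : (sP.app X w)
        = ∑ i : Fin n, (biproduct.ι (coyF A) i).app X (gElt sP i w) :=
      biproduct_decomp (coyF A) X (sP.app X w)
    rw [h1, hb, map_sum]
    refine Finset.sum_congr rfl fun i _ => ?_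
    have h2 : (biproduct.desc φ).app X ((biproduct.ι (coyF A) i).app X (gElt sP i w))
        = ((biproduct.ι (coyF A) i) ≫ biproduct.desc φ).app X (gElt sP i w) := rfl
    rw [h2, biproduct.ι_desc]
    rfl
  have key : ∀ (T : Set 𝔞) (ρ : (res T).obj P ⟶ (res T).obj (kernel p)),
      ((res T).map (kernel.ι p) ≫ ρ = 𝟙 ((res T).obj (kernel p))) →
      ∀ (hA : ∀ i, A i ∈ T) (X : 𝔞) (hX : X ∈ T) (x : (kernel p).obj X),
      x = ∑ i : Fin n, (kernel p).map (gElt sP i (j.app X x))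
            (ρ.app ⟨A i, hA i⟩ (yElt rP i)) := by
    intro T ρ hρ hA X hX x
    have h1 : ρ.app ⟨X, hX⟩ (j.app X x) = x := by
      have h2 := congrArg
        (fun (η : (res T).obj (kernel p) ⟶ (res T).obj (kernel p)) =>
          η.app ⟨X, hX⟩ x) hρ
      exact h2
    have h2 : j.app X x
        = ∑ i : Fin n, P.map (gElt sP i (j.app X x)) (yElt rP i) :=
      decomp sP rP hPr (j.app X x)
    calc x = show (kernel p).obj X from ρ.app ⟨X, hX⟩ (j.app X x) := h1.symm
      _ = show (kernel p).obj X from ρ.app ⟨X, hX⟩ (∑ i : Fin n, P.map (gElt sP i (j.app X x)) (yElt rP i)) :=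
          congrArg (ρ.app ⟨X, hX⟩) h2
      _ = show (kernel p).obj X from ∑ i : Fin n, ρ.app ⟨X, hX⟩ (P.map (gElt sP i (j.app X x)) (yElt rP i)) :=
          map_sum _ _ _
      _ = ∑ i : Fin n, (kernel p).map (gElt sP i (j.app X x))
            (ρ.app ⟨A i, hA i⟩ (yElt rP i)) := by
          refine Finset.sum_congr rfl fun i _ => ?_
          exact nat_apply (C := ObjectProperty.FullSubcategory (fun x => x ∈ T)) ρ
            (ObjectProperty.homMk (P := fun x => x ∈ T) (X := ⟨A i, hA i⟩) (Y := ⟨X, hX⟩) (gElt sP i (j.app X x)))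
            (yElt rP i)
  have hts : ∀ (X : 𝔞) (hX : X ∈ S) (x : (kernel p).obj X),
      t.app X (j.app X x) = x := by
    intro X hX x
    rw [tcomp]
    exact (key S ρS hρS memA X hX x).symm
  have hid : j ≫ t = 𝟙 (kernel p) := by
    apply NatTrans.ext
    funext X
    refine AddCommGrpCat.ext fun x => ?_
    show t.app X (j.app X x) = x
    have hTfin : (insert X S).Finite := hSfin.insert X
    have memA' : ∀ i, A i ∈ insert X S := fun i => Set.mem_insert_of_mem X (memA i)
    have memB' : ∀ i, B i ∈ insert X S := fun i => Set.mem_insert_of_mem X (memB i)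
    obtain ⟨ρT, hρT⟩ := getρ (insert X S) hTfin memA' memB'
    have hkey := key (insert X S) ρT hρT memA' X (Set.mem_insert X S) x
    have step : ∀ (i : Fin n) (g : A i ⟶ X) (c : (kernel p).obj (A i)),
        t.app X (j.app X ((kernel p).map g c)) = (kernel p).map g (t.app (A i) (j.app (A i) c)) := by
      intro i g c
      rw [nat_apply j g c, nat_apply t g (j.app (A i) c)]
    calc t.app X (j.app X x)
        = t.app X (j.app X (∑ i : Fin n, (kernel p).map (gElt sP i (j.app X x))
            (ρT.app ⟨A i, memA' i⟩ (yElt rP i)))) := congrArg (fun c => t.app X (j.app X c)) hkey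
      _ = t.app X (∑ i : Fin n, j.app X ((kernel p).map (gElt sP i (j.app X x))
            (ρT.app ⟨A i, memA' i⟩ (yElt rP i)))) := congrArg (t.app X) (map_sum _ _ _)
      _ = ∑ i : Fin n, t.app X (j.app X ((kernel p).map (gElt sP i (j.app X x))
            (ρT.app ⟨A i, memA' i⟩ (yElt rP i)))) := map_sum _ _ _
      _ = ∑ i : Fin n, (kernel p).map (gElt sP i (j.app X x))
            (ρT.app ⟨A i, memA' i⟩ (yElt rP i)) := by
          refine Finset.sum_congr rfl fun i _ => ?_
          erw [step i _ _, hts (A i) (memA i) _]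
      _ = x := hkey.symm
  constructor
  · exact ⟨n, A, j ≫ sP, rP ≫ t, by
      rw [Category.assoc, ← Category.assoc sP rP t, hPr, Category.id_comp, hid]⟩
  · exact IsSplitMono.mk' ⟨t, hid⟩

end
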